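/- Let a, e ∈ ℝ and let h, g : ℤ → ℝ satisfy Σ_{k ∈ ℤ} h_k² < ∞ and Σ_{k ∈ ℤ} g_k² < ∞. Define λ_k = k + a + h_k and μ_k = k + e + g_k and assume λ_k ≠ 0 and μ_k ≠ 0 for all k ≠ 0. Then the infinite product ∏_{k=1}^{∞} (μ_k · μ_{−k}) / (λ_k · λ_{−k}) converges: the partial products ∏_{k=1}^{N} (μ_k μ_{−k})/(λ_k λ_{−k}) tend, as N → ∞, to a finite nonzero limit. -/

import Mathlib

open Filter

/-- `|log (1+x)| ≤ 2|x|` for `|x| ≤ 1/2`. -/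
lemma abs_log_one_add_le_two_abs {x : ℝ} (hx : |x| ≤ 1/2) :
    |Real.log (1 + x)| ≤ 2 * |x| := by
  have hx1 : -(1/2) ≤ x := neg_le_of_abs_le hx
  have hx2 : x ≤ 1/2 := le_of_abs_le hx
  have hpos : (0:ℝ) < 1 + x := by linarith
  have hub : Real.log (1 + x) ≤ x := by
    have := Real.log_le_sub_one_of_pos hpos
    linarith
  have hlb : 1 - (1 + x)⁻¹ ≤ Real.log (1 + x) :=
    Real.one_sub_inv_le_log_of_pos hpos
  have hinv : (1 + x)⁻¹ ≤ 1 + 2 * |x| := by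
    rw [inv_le_iff_one_le_mul₀ hpos]
    have h1 : |x| ≥ x := le_abs_self x
    have h2 : |x| ≥ -x := neg_le_abs x
    nlinarith [abs_nonneg x]
  rw [abs_le]
  constructor
  · have : 1 - (1 + x)⁻¹ ≥ -(2 * |x|) := by linarith
    linarith
  · have := le_abs_self x
    linarith

set_option maxHeartbeats 1000000 in
lemma le_sq_div_four_add_one (u : ℝ) : u ≤ u ^ 2 / 4 + 1 := by
  nlinarith [sq_nonneg (u - 2)]

theorem stmt_10 (a e : ℝ) (h g : ℤ → ℝ)
    (hh : Summable fun k : ℤ => (h k) ^ 2) (hg : Summable fun k : ℤ => (g k) ^ 2)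
    (hlam : ∀ k : ℤ, k ≠ 0 → (k : ℝ) + a + h k ≠ 0)
    (hmu : ∀ k : ℤ, k ≠ 0 → (k : ℝ) + e + g k ≠ 0) :
    ∃ L : ℝ, L ≠ 0 ∧
      Tendsto (fun N : ℕ => ∏ k ∈ Finset.Icc 1 N,
          ((((k : ℤ) : ℝ) + e + g (k : ℤ)) * ((-(k : ℤ) : ℝ) + e + g (-(k : ℤ)))) /
            ((((k : ℤ) : ℝ) + a + h (k : ℤ)) * ((-(k : ℤ) : ℝ) + a + h (-(k : ℤ)))))
        atTop (nhds L) := by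
  classical
  -- the factor of the product
  set t : ℕ → ℝ := fun k =>
    ((((k : ℤ) : ℝ) + e + g (k : ℤ)) * ((-(k : ℤ) : ℝ) + e + g (-(k : ℤ)))) /
      ((((k : ℤ) : ℝ) + a + h (k : ℤ)) * ((-(k : ℤ) : ℝ) + a + h (-(k : ℤ)))) with ht_def
  have ht_eq : ∀ k : ℕ, t k =
      (((k : ℝ) + e + g (k : ℤ)) * (-(k : ℝ) + e + g (-(k : ℤ)))) /
        (((k : ℝ) + a + h (k : ℤ)) * (-(k : ℝ) + a + h (-(k : ℤ)))) := by
    intro k; simp only [ht_def]; push_cast; ring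
  -- uniform bounds on h and g
  set Mh : ℝ := Real.sqrt (∑' k : ℤ, (h k) ^ 2) with hMh_def
  set Mg : ℝ := Real.sqrt (∑' k : ℤ, (g k) ^ 2) with hMg_def
  have hMh : ∀ k : ℤ, |h k| ≤ Mh := by
    intro k
    have h1 : (h k) ^ 2 ≤ ∑' j : ℤ, (h j) ^ 2 :=
      hh.le_tsum k (fun j _ => sq_nonneg _)
    calc |h k| = Real.sqrt ((h k) ^ 2) := (Real.sqrt_sq_eq_abs _).symm
      _ ≤ Mh := Real.sqrt_le_sqrt h1
  have hMg : ∀ k : ℤ, |g k| ≤ Mg := by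
    intro k
    have h1 : (g k) ^ 2 ≤ ∑' j : ℤ, (g j) ^ 2 :=
      hg.le_tsum k (fun j _ => sq_nonneg _)
    calc |g k| = Real.sqrt ((g k) ^ 2) := (Real.sqrt_sq_eq_abs _).symm
      _ ≤ Mg := Real.sqrt_le_sqrt h1
  have hMh0 : 0 ≤ Mh := Real.sqrt_nonneg _
  have hMg0 : 0 ≤ Mg := Real.sqrt_nonneg _
  -- the dominating summable sequence
  set d : ℕ → ℝ := fun k =>
    (h (k : ℤ)) ^ 2 + (h (-(k : ℤ))) ^ 2 + (g (k : ℤ)) ^ 2 + (g (-(k : ℤ))) ^ 2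
      + ((k : ℝ) ^ 2)⁻¹ with hd_def
  have hd_sum : Summable d := by
    have h1 : Summable fun k : ℕ => (h (k : ℤ)) ^ 2 :=
      hh.comp_injective (fun x y hxy => by exact_mod_cast hxy)
    have h2 : Summable fun k : ℕ => (h (-(k : ℤ))) ^ 2 :=
      hh.comp_injective (fun x y hxy => by
        simp only [neg_inj] at hxy; exact_mod_cast hxy)
    have h3 : Summable fun k : ℕ => (g (k : ℤ)) ^ 2 :=
      hg.comp_injective (fun x y hxy => by exact_mod_cast hxy)
    have h4 : Summable fun k : ℕ => (g (-(k : ℤ))) ^ 2 :=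
      hg.comp_injective (fun x y hxy => by
        simp only [neg_inj] at hxy; exact_mod_cast hxy)
    have h5 : Summable fun k : ℕ => ((k : ℝ) ^ 2)⁻¹ := by
      have := Real.summable_one_div_nat_pow.mpr (le_refl 2)
      simpa [one_div] using this
    exact (((h1.add h2).add h3).add h4).add h5
  have hd_nonneg : ∀ k, 0 ≤ d k := by
    intro k; simp only [hd_def]; positivity
  -- constants
  set B : ℝ := (|e| + Mg) ^ 2 + (|a| + Mh) ^ 2 with hB_def
  have hB0 : 0 ≤ B := by positivity
  set C : ℝ := 17 + 4 * B with hC_def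
  have hC1 : 1 ≤ C := by simp only [hC_def]; linarith
  -- remainder c
  set c : ℕ → ℝ := fun k => t k - 1 with hc_def
  obtain ⟨K₀, hK₀⟩ := exists_nat_ge (2 * (|a| + Mh + |e| + Mg + 1))
  -- the key estimate
  have key : ∀ k : ℕ, max K₀ 1 ≤ k → |c k| ≤ C * d k := by
    intro k hk
    have hk1 : 1 ≤ k := le_trans (le_max_right _ _) hk
    have hk1R : (1 : ℝ) ≤ (k : ℝ) := by exact_mod_cast hk1
    have hkx : 2 * (|a| + Mh + |e| + Mg + 1) ≤ (k : ℝ) := by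
      refine hK₀.trans ?_
      exact_mod_cast le_trans (le_max_left _ _) hk
    have ha1 : |h (k : ℤ)| ≤ Mh := hMh _
    have ha2 : |h (-(k : ℤ))| ≤ Mh := hMh _
    have ha3 : |g (k : ℤ)| ≤ Mg := hMg _
    have ha4 : |g (-(k : ℤ))| ≤ Mg := hMg _
    have habs := fun (x : ℝ) => abs_nonneg x
    set x1 : ℝ := (k : ℝ) + a + h (k : ℤ) with hx1_def
    set x2 : ℝ := -(k : ℝ) + a + h (-(k : ℤ)) with hx2_def
    set y1 : ℝ := (k : ℝ) + e + g (k : ℤ) with hy1_def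
    set y2 : ℝ := -(k : ℝ) + e + g (-(k : ℤ)) with hy2_def
    have hx1pos : (k : ℝ) / 2 ≤ x1 := by
      have e1 : -Mh ≤ h (k : ℤ) := by linarith [neg_abs_le (h (k : ℤ))]
      simp only [hx1_def]
      linarith [neg_abs_le a, abs_nonneg e]
    have hx2neg : x2 ≤ -((k : ℝ) / 2) := by
      have h1 : h (-(k : ℤ)) ≤ Mh := le_of_abs_le ha2
      have h2 : a ≤ |a| := le_abs_self a
      simp only [hx2_def]; linarith [abs_nonneg e]
    have hx1abs : (k : ℝ) / 2 ≤ |x1| := le_trans hx1pos (le_abs_self _)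
    have hx2abs : (k : ℝ) / 2 ≤ |x2| := by
      have : (k : ℝ) / 2 ≤ -x2 := by linarith
      exact le_trans this (neg_le_abs _)
    have hkpos : (0 : ℝ) < (k : ℝ) := by linarith
    have hx1ne : x1 ≠ 0 := by
      intro h0; rw [h0] at hx1pos; linarith
    have hx2ne : x2 ≠ 0 := by
      intro h0; rw [h0] at hx2neg; linarith
    have hDne : x1 * x2 ≠ 0 := mul_ne_zero hx1ne hx2ne
    have hDabs : (k : ℝ) ^ 2 / 4 ≤ |x1 * x2| := by
      rw [abs_mul]
      calc (k : ℝ) ^ 2 / 4 = ((k : ℝ) / 2) * ((k : ℝ) / 2) := by ring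
        _ ≤ |x1| * |x2| := by
            apply mul_le_mul hx1abs hx2abs (by linarith) (abs_nonneg _)
    have hck : c k = (y1 * y2 - x1 * x2) / (x1 * x2) := by
      simp only [hc_def, ht_eq k, hx1_def, hx2_def, hy1_def, hy2_def]
      field_simp
      exact div_sub_one hDne
    have hdiff : |y1 * y2 - x1 * x2| ≤
        (k : ℝ) * (|g (k : ℤ)| + |g (-(k : ℤ))| + |h (k : ℤ)| + |h (-(k : ℤ))|) + B := by
      have heq : y1 * y2 - x1 * x2 =
          (k : ℝ) * ((g (-(k : ℤ)) - g (k : ℤ)) - (h (-(k : ℤ)) - h (k : ℤ)))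
            + ((e + g (k : ℤ)) * (e + g (-(k : ℤ))) - (a + h (k : ℤ)) * (a + h (-(k : ℤ)))) := by
        simp only [hx1_def, hx2_def, hy1_def, hy2_def]; ring
      rw [heq]
      have h1 : |(k : ℝ) * ((g (-(k : ℤ)) - g (k : ℤ)) - (h (-(k : ℤ)) - h (k : ℤ)))| ≤
          (k : ℝ) * (|g (k : ℤ)| + |g (-(k : ℤ))| + |h (k : ℤ)| + |h (-(k : ℤ))|) := by
        rw [abs_mul, abs_of_pos hkpos]
        apply mul_le_mul_of_nonneg_left _ (le_of_lt hkpos)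
        calc |(g (-(k : ℤ)) - g (k : ℤ)) - (h (-(k : ℤ)) - h (k : ℤ))|
            ≤ |g (-(k : ℤ)) - g (k : ℤ)| + |h (-(k : ℤ)) - h (k : ℤ)| := abs_sub _ _
          _ ≤ (|g (-(k : ℤ))| + |g (k : ℤ)|) + (|h (-(k : ℤ))| + |h (k : ℤ)|) :=
              add_le_add (abs_sub _ _) (abs_sub _ _)
          _ = |g (k : ℤ)| + |g (-(k : ℤ))| + |h (k : ℤ)| + |h (-(k : ℤ))| := by ring
      have h2 : |(e + g (k : ℤ)) * (e + g (-(k : ℤ))) - (a + h (k : ℤ)) * (a + h (-(k : ℤ)))| ≤ B := by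
        have hb1 : |(e + g (k : ℤ)) * (e + g (-(k : ℤ)))| ≤ (|e| + Mg) ^ 2 := by
          rw [abs_mul]
          have e1 : |e + g (k : ℤ)| ≤ |e| + Mg :=
            (abs_add_le _ _).trans (by linarith)
          have e2 : |e + g (-(k : ℤ))| ≤ |e| + Mg :=
            (abs_add_le _ _).trans (by linarith)
          calc |e + g (k : ℤ)| * |e + g (-(k : ℤ))| ≤ (|e| + Mg) * (|e| + Mg) :=
              mul_le_mul e1 e2 (abs_nonneg _) (by positivity)
            _ = (|e| + Mg) ^ 2 := by ring
        have hb2 : |(a + h (k : ℤ)) * (a + h (-(k : ℤ)))| ≤ (|a| + Mh) ^ 2 := by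
          rw [abs_mul]
          have e1 : |a + h (k : ℤ)| ≤ |a| + Mh :=
            (abs_add_le _ _).trans (by linarith)
          have e2 : |a + h (-(k : ℤ))| ≤ |a| + Mh :=
            (abs_add_le _ _).trans (by linarith)
          calc |a + h (k : ℤ)| * |a + h (-(k : ℤ))| ≤ (|a| + Mh) * (|a| + Mh) :=
              mul_le_mul e1 e2 (abs_nonneg _) (by positivity)
            _ = (|a| + Mh) ^ 2 := by ring
        calc |(e + g (k : ℤ)) * (e + g (-(k : ℤ))) - (a + h (k : ℤ)) * (a + h (-(k : ℤ)))|
            ≤ |(e + g (k : ℤ)) * (e + g (-(k : ℤ)))| + |(a + h (k : ℤ)) * (a + h (-(k : ℤ)))| :=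
              abs_sub _ _
          _ ≤ B := by simp only [hB_def]; linarith
      calc |(k : ℝ) * ((g (-(k : ℤ)) - g (k : ℤ)) - (h (-(k : ℤ)) - h (k : ℤ)))
            + ((e + g (k : ℤ)) * (e + g (-(k : ℤ))) - (a + h (k : ℤ)) * (a + h (-(k : ℤ))))|
          ≤ |(k : ℝ) * ((g (-(k : ℤ)) - g (k : ℤ)) - (h (-(k : ℤ)) - h (k : ℤ)))|
            + |(e + g (k : ℤ)) * (e + g (-(k : ℤ))) - (a + h (k : ℤ)) * (a + h (-(k : ℤ)))| :=
            abs_add_le _ _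
        _ ≤ _ := add_le_add h1 h2
    -- now combine
    rw [hck, abs_div]
    have hD4 : (0 : ℝ) < (k : ℝ) ^ 2 / 4 := by positivity
    have step1 : |y1 * y2 - x1 * x2| / |x1 * x2| ≤ |y1 * y2 - x1 * x2| / ((k : ℝ) ^ 2 / 4) :=
      div_le_div_of_nonneg_left (abs_nonneg _) hD4 hDabs
    refine step1.trans ?_
    rw [div_le_iff₀ hD4]
    have hinv : ((k : ℝ) ^ 2)⁻¹ * (k : ℝ) ^ 2 = 1 := by
      field_simp
    have hdk : C * d k * ((k : ℝ) ^ 2 / 4) =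
        C * ((h (k : ℤ)) ^ 2 + (h (-(k : ℤ))) ^ 2 + (g (k : ℤ)) ^ 2 + (g (-(k : ℤ))) ^ 2)
          * ((k : ℝ) ^ 2 / 4) + C / 4 := by
      simp only [hd_def]
      field_simp
    rw [hdk]
    have am1 : (k : ℝ) * |g (k : ℤ)| ≤ (k : ℝ) ^ 2 * (g (k : ℤ)) ^ 2 / 4 + 1 := by
      have := le_sq_div_four_add_one ((k : ℝ) * |g (k : ℤ)|)
      rwa [mul_pow, sq_abs] at this
    have am2 : (k : ℝ) * |g (-(k : ℤ))| ≤ (k : ℝ) ^ 2 * (g (-(k : ℤ))) ^ 2 / 4 + 1 := by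
      have := le_sq_div_four_add_one ((k : ℝ) * |g (-(k : ℤ))|)
      rwa [mul_pow, sq_abs] at this
    have am3 : (k : ℝ) * |h (k : ℤ)| ≤ (k : ℝ) ^ 2 * (h (k : ℤ)) ^ 2 / 4 + 1 := by
      have := le_sq_div_four_add_one ((k : ℝ) * |h (k : ℤ)|)
      rwa [mul_pow, sq_abs] at this
    have am4 : (k : ℝ) * |h (-(k : ℤ))| ≤ (k : ℝ) ^ 2 * (h (-(k : ℤ))) ^ 2 / 4 + 1 := by
      have := le_sq_div_four_add_one ((k : ℝ) * |h (-(k : ℤ))|)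
      rwa [mul_pow, sq_abs] at this
    have hsq_nonneg : (0 : ℝ) ≤
        (h (k : ℤ)) ^ 2 + (h (-(k : ℤ))) ^ 2 + (g (k : ℤ)) ^ 2 + (g (-(k : ℤ))) ^ 2 := by
      positivity
    have hCge : C * ((h (k : ℤ)) ^ 2 + (h (-(k : ℤ))) ^ 2 + (g (k : ℤ)) ^ 2 + (g (-(k : ℤ))) ^ 2)
        ≥ 1 * ((h (k : ℤ)) ^ 2 + (h (-(k : ℤ))) ^ 2 + (g (k : ℤ)) ^ 2 + (g (-(k : ℤ))) ^ 2) :=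
      mul_le_mul_of_nonneg_right hC1 hsq_nonneg
    have hC4 : C / 4 = 17 / 4 + B := by simp only [hC_def]; ring
    have hk2pos : (0 : ℝ) < (k : ℝ) ^ 2 := by positivity
    have hscaled := mul_le_mul_of_nonneg_right hCge
      (le_of_lt (by positivity : (0:ℝ) < (k : ℝ) ^ 2 / 4))
    have expand1 : (k : ℝ) * (|g (k : ℤ)| + |g (-(k : ℤ))| + |h (k : ℤ)| + |h (-(k : ℤ))|)
        = (k : ℝ) * |g (k : ℤ)| + (k : ℝ) * |g (-(k : ℤ))|
          + (k : ℝ) * |h (k : ℤ)| + (k : ℝ) * |h (-(k : ℤ))| := by ring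
    have expand2 : 1 * ((h (k : ℤ)) ^ 2 + (h (-(k : ℤ))) ^ 2 + (g (k : ℤ)) ^ 2
          + (g (-(k : ℤ))) ^ 2) * ((k : ℝ) ^ 2 / 4)
        = (k : ℝ) ^ 2 * (h (k : ℤ)) ^ 2 / 4 + (k : ℝ) ^ 2 * (h (-(k : ℤ))) ^ 2 / 4
          + (k : ℝ) ^ 2 * (g (k : ℤ)) ^ 2 / 4 + (k : ℝ) ^ 2 * (g (-(k : ℤ))) ^ 2 / 4 := by
      ring
    linarith [hdiff, am1, am2, am3, am4, hscaled, hC4, hB0, expand1, expand2]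
  -- summability of c
  have hc_sum : Summable c := by
    apply summable_of_isBigO_nat hd_sum
    rw [Asymptotics.isBigO_iff]
    refine ⟨C, ?_⟩
    filter_upwards [eventually_ge_atTop (max K₀ 1)] with k hk
    have := key k hk
    simpa [Real.norm_eq_abs, abs_of_nonneg (hd_nonneg k)] using this
  -- c tends to 0
  have hc_tend : Tendsto c atTop (nhds 0) := hc_sum.tendsto_atTop_zero
  have hc_small : ∀ᶠ k : ℕ in atTop, |c k| ≤ 1 / 2 := by
    have := Metric.tendsto_nhds.1 hc_tend (1/2) (by norm_num)
    filter_upwards [this] with k hk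
    rw [Real.dist_eq, sub_zero] at hk
    exact le_of_lt hk
  -- logs
  set l : ℕ → ℝ := fun k => Real.log (t k) with hl_def
  have ht_c : ∀ k, t k = 1 + c k := by intro k; simp [hc_def]
  have hl_sum : Summable l := by
    apply summable_of_isBigO_nat hc_sum
    rw [Asymptotics.isBigO_iff]
    refine ⟨2, ?_⟩
    filter_upwards [hc_small] with k hk
    have := abs_log_one_add_le_two_abs hk
    rw [← ht_c k] at this
    simpa [Real.norm_eq_abs, hl_def] using this
  -- choose the cut K
  obtain ⟨K₁, hK₁⟩ := eventually_atTop.1 hc_small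
  set K : ℕ := max K₁ 1 with hK_def
  have hK1 : 1 ≤ K := le_max_right _ _
  have ht_pos : ∀ k : ℕ, K ≤ k → 0 < t k := by
    intro k hk
    have h1 : |c k| ≤ 1/2 := hK₁ k (le_trans (le_max_left _ _) hk)
    have h2 : -(1/2 : ℝ) ≤ c k := neg_le_of_abs_le h1
    simp only [hc_def] at h2
    rw [ht_c k]
    simp only [hc_def]
    linarith
  -- nonvanishing of t for k ≥ 1
  have ht_ne : ∀ k : ℕ, 1 ≤ k → t k ≠ 0 := by
    intro k hk
    have hkZ : (k : ℤ) ≠ 0 := by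
      simp only [ne_eq, Nat.cast_eq_zero]; omega
    have hkZ' : -(k : ℤ) ≠ 0 := neg_ne_zero.mpr hkZ
    have hmu1 := hmu _ hkZ
    have hmu2 := hmu _ hkZ'
    have hlam1 := hlam _ hkZ
    have hlam2 := hlam _ hkZ'
    push_cast at hmu2 hlam2
    exact div_ne_zero (mul_ne_zero hmu1 hmu2) (mul_ne_zero hlam1 hlam2)
  -- tail sums converge
  set T : ℝ := ∑' k, l k with hT_def
  have hTsum : HasSum l T := hl_sum.hasSum
  have htd : Tendsto (fun n : ℕ => ∑ i ∈ Finset.range n, l i) atTop (nhds T) :=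
    hTsum.tendsto_sum_nat
  set S : ℝ := T - ∑ i ∈ Finset.range K, l i with hS_def
  have tail_sum : Tendsto (fun N : ℕ => ∑ i ∈ Finset.Ico K (N + 1), l i) atTop (nhds S) := by
    have h1 : Tendsto (fun N : ℕ => (∑ i ∈ Finset.range (N + 1), l i)
        - ∑ i ∈ Finset.range K, l i) atTop (nhds S) := by
      simp only [hS_def]
      exact (htd.comp (tendsto_add_atTop_nat 1)).sub_const _
    apply h1.congr'
    filter_upwards [eventually_ge_atTop K] with N hN
    rw [Finset.sum_Ico_eq_sub _ (by omega : K ≤ N + 1)]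
  -- tail products converge to exp S
  have tail_prod : Tendsto (fun N : ℕ => ∏ k ∈ Finset.Ico K (N + 1), t k) atTop
      (nhds (Real.exp S)) := by
    have h1 : Tendsto (fun N : ℕ => Real.exp (∑ i ∈ Finset.Ico K (N + 1), l i)) atTop
        (nhds (Real.exp S)) := (Real.continuous_exp.tendsto _).comp tail_sum
    apply h1.congr
    intro N
    rw [Real.exp_sum]
    apply Finset.prod_congr rfl
    intro k hk
    have hkK : K ≤ k := (Finset.mem_Ico.1 hk).1
    exact Real.exp_log (ht_pos k hkK)
  -- assemble
  set Q : ℝ := ∏ k ∈ Finset.Ico 1 K, t k with hQ_def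
  have hQne : Q ≠ 0 := by
    simp only [hQ_def]
    apply Finset.prod_ne_zero_iff.2
    intro k hk
    exact ht_ne k (Finset.mem_Ico.1 hk).1
  refine ⟨Q * Real.exp S, mul_ne_zero hQne (Real.exp_ne_zero _), ?_⟩
  have hfinal : Tendsto (fun N : ℕ => Q * ∏ k ∈ Finset.Ico K (N + 1), t k) atTop
      (nhds (Q * Real.exp S)) := tail_prod.const_mul Q
  apply hfinal.congr'
  filter_upwards [eventually_ge_atTop K] with N hN
  have hsplit : (∏ k ∈ Finset.Ico 1 K, t k) * ∏ k ∈ Finset.Ico K (N + 1), t k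
      = ∏ k ∈ Finset.Ico 1 (N + 1), t k :=
    Finset.prod_Ico_consecutive t hK1 (by omega)
  calc Q * ∏ k ∈ Finset.Ico K (N + 1), t k
      = ∏ k ∈ Finset.Ico 1 (N + 1), t k := hsplit
    _ = ∏ k ∈ Finset.Icc 1 N, t k := by rw [Finset.Ico_add_one_right_eq_Icc]
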